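/- arXiv:1508.05170 — 2 statements merged into one kernel-verified Lean document; each statement's English description precedes it below -/
import Mathlib

section
/- Let (X_i)_{i=1}^∞ be real-valued random variables, (B_i), (σ_i), (s_i) positive sequences, and C_1, C_2 ≥ 0 constants such that for all i and all τ > 0, P(X_i − B_i > τ) ≤ C_1·exp(−τ²/(2σ_i²)) + C_2·exp(−τ·s_i). Fix σ̄ ≤ σ_1 and s̄ ≥ s_1, and set θ_i = max{ (σ_i/B_i)·√(2·log(σ_i/σ̄) + 4·log i), (B_i·s_i)^{-1}·log(i²·s̄/s_i) } + 1. Then E[ sup_i (X_i − B_i·θ_i) ] ≤ 3·C_1·σ̄ + 2·C_2/s̄. -/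
open MeasureTheory Real Set

lemma aux_pi_sq_div_six_le_two : Real.pi ^ 2 / 6 ≤ 2 := by
  nlinarith [Real.pi_lt_d2, Real.pi_pos]

lemma aux_integral_exp_neg_mul {b : ℝ} (hb : 0 < b) :
    ∫ x in Set.Ioi (0:ℝ), Real.exp (-b * x) = 1 / b := by
  have h := integral_comp_mul_left_Ioi (fun y => Real.exp (-y)) 0 hb
  simp only [mul_zero, smul_eq_mul, integral_exp_neg_Ioi_zero] at h
  simpa [neg_mul, one_div] using h

/-- Maximal inequality for a sequence of random variables with mixed
subgaussian/subexponential one-sided tails. -/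
theorem stmt0 {Ω : Type*} [MeasurableSpace Ω] (ℙ : Measure Ω) [IsProbabilityMeasure ℙ]
    (X : ℕ → Ω → ℝ) (B σ s θ : ℕ → ℝ) (C1 C2 σbar sbar : ℝ)
    (hC1 : 0 ≤ C1) (hC2 : 0 ≤ C2)
    (hB : ∀ i, 1 ≤ i → 0 < B i) (hσ : ∀ i, 1 ≤ i → 0 < σ i) (hs : ∀ i, 1 ≤ i → 0 < s i)
    (hσbar : 0 < σbar) (hσbar1 : σbar ≤ σ 1) (hsbar : sbar ≥ s 1)
    (htail : ∀ i, 1 ≤ i → ∀ τ > (0:ℝ),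
      (ℙ {ω | X i ω - B i > τ}).toReal
        ≤ C1 * exp (-(τ ^ 2) / (2 * (σ i) ^ 2)) + C2 * exp (-(τ * s i)))
    (hθ : ∀ i, 1 ≤ i → θ i =
      max ((σ i / B i) * Real.sqrt (2 * Real.log (σ i / σbar) + 4 * Real.log i))
          ((B i * s i)⁻¹ * Real.log ((i : ℝ) ^ 2 * (sbar / s i))) + 1) :
    ∫ ω, (⨆ i : {j : ℕ // 1 ≤ j}, (X i.1 ω - B i.1 * θ i.1)) ∂ℙ
      ≤ 3 * C1 * σbar + 2 * C2 / sbar := by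
  have hι : Nonempty {j : ℕ // 1 ≤ j} := ⟨⟨1, le_rfl⟩⟩
  have hsbar0 : 0 < sbar := lt_of_lt_of_le (hs 1 le_rfl) hsbar
  have hR : 0 ≤ 3 * C1 * σbar + 2 * C2 / sbar := by positivity
  set f : Ω → ℝ := fun ω => ⨆ i : {j : ℕ // 1 ≤ j}, (X i.1 ω - B i.1 * θ i.1) with hf
  clear_value f
  by_cases hint : Integrable f ℙ
  swap
  · rw [integral_undef hint]; exact hR
  -- basic positivity facts
  have hipos : ∀ i : ℕ, 1 ≤ i → (0:ℝ) < (i:ℝ) := fun i hi => by exact_mod_cast hi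
  -- the shift
  set a : ℕ → ℝ := fun i => B i * (θ i - 1) with ha
  clear_value a
  have ha_eq : ∀ i, 1 ≤ i → a i = B i *
      max ((σ i / B i) * Real.sqrt (2 * Real.log (σ i / σbar) + 4 * Real.log i))
          ((B i * s i)⁻¹ * Real.log ((i : ℝ) ^ 2 * (sbar / s i))) := by
    intro i hi
    have : θ i - 1 = max ((σ i / B i) * Real.sqrt (2 * Real.log (σ i / σbar) + 4 * Real.log i))
          ((B i * s i)⁻¹ * Real.log ((i : ℝ) ^ 2 * (sbar / s i))) := by
      rw [hθ i hi]; ring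
    simp only [ha, this]
  have ha_nonneg : ∀ i, 1 ≤ i → 0 ≤ a i := by
    intro i hi
    rw [ha_eq i hi]
    have h1 : (0:ℝ) ≤ (σ i / B i) * Real.sqrt (2 * Real.log (σ i / σbar) + 4 * Real.log i) := by
      have := (hσ i hi).le
      have := (hB i hi).le
      positivity
    exact mul_nonneg (hB i hi).le (le_trans h1 (le_max_left _ _))
  -- the two key exponential bounds
  have L1 : ∀ i, 1 ≤ i → exp (-(a i ^ 2) / (2 * σ i ^ 2)) ≤ σbar / (σ i * (i:ℝ)^2) := by
    intro i hi
    have hσi := hσ i hi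
    have hBi := hB i hi
    have hi0 : (0:ℝ) < (i:ℝ) := hipos i hi
    set E : ℝ := 2 * Real.log (σ i / σbar) + 4 * Real.log i with hE
    clear_value E
    have haE : σ i * Real.sqrt E ≤ a i := by
      rw [ha_eq i hi, ← hE]
      have h1 : (σ i / B i) * Real.sqrt E ≤
          max ((σ i / B i) * Real.sqrt E) ((B i * s i)⁻¹ * Real.log ((i : ℝ) ^ 2 * (sbar / s i))) :=
        le_max_left _ _
      calc σ i * Real.sqrt E = B i * ((σ i / B i) * Real.sqrt E) := by
            field_simp
          _ ≤ B i * max ((σ i / B i) * Real.sqrt E)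
              ((B i * s i)⁻¹ * Real.log ((i : ℝ) ^ 2 * (sbar / s i))) :=
            mul_le_mul_of_nonneg_left h1 hBi.le
    have hP : (0:ℝ) < σ i * (i:ℝ)^2 / σbar := by positivity
    have hlogP : Real.log (σ i * (i:ℝ)^2 / σbar) = E / 2 := by
      rw [show σ i * (i:ℝ)^2 / σbar = (σ i / σbar) * (i:ℝ)^2 by ring,
        Real.log_mul (by positivity) (by positivity), Real.log_pow, hE]
      push_cast
      ring
    rcases le_or_gt 0 E with hEpos | hEneg
    · have hsE : (0:ℝ) ≤ σ i * Real.sqrt E := by positivity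
      have ha2 : σ i ^ 2 * E ≤ a i ^ 2 := by
        nlinarith [Real.sq_sqrt hEpos, Real.sqrt_nonneg E, haE]
      have h2σ : (0:ℝ) < 2 * σ i ^ 2 := by positivity
      have harg : -(a i ^ 2) / (2 * σ i ^ 2) ≤ -(Real.log (σ i * (i:ℝ)^2 / σbar)) := by
        rw [hlogP, div_le_iff₀ h2σ]
        nlinarith
      calc exp (-(a i ^ 2) / (2 * σ i ^ 2)) ≤ exp (-(Real.log (σ i * (i:ℝ)^2 / σbar))) :=
            exp_le_exp.2 harg
        _ = σbar / (σ i * (i:ℝ)^2) := by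
            rw [Real.exp_neg, Real.exp_log hP, inv_div]
    · have h1 : σ i * (i:ℝ)^2 / σbar < 1 := by
        have hlt : Real.log (σ i * (i:ℝ)^2 / σbar) < 0 := by rw [hlogP]; linarith
        exact (Real.log_neg_iff hP).1 hlt
      have h2 : σ i * (i:ℝ)^2 ≤ σbar := by
        rw [div_lt_one hσbar] at h1; linarith
      calc exp (-(a i ^ 2) / (2 * σ i ^ 2)) ≤ exp 0 := by
            apply exp_le_exp.2
            apply div_nonpos_of_nonpos_of_nonneg
            · exact neg_nonpos.2 (sq_nonneg _)
            · positivity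
        _ = 1 := Real.exp_zero
        _ ≤ σbar / (σ i * (i:ℝ)^2) := by
            rw [le_div_iff₀ (by positivity)]; linarith

  have L2 : ∀ i, 1 ≤ i → exp (-(a i * s i)) ≤ s i / (sbar * (i:ℝ)^2) := by
    intro i hi
    have hsi := hs i hi
    have hBi := hB i hi
    have hi0 : (0:ℝ) < (i:ℝ) := hipos i hi
    have hq : (0:ℝ) < (i:ℝ)^2 * (sbar / s i) := by positivity
    have hL : Real.log ((i:ℝ)^2 * (sbar / s i)) ≤ a i * s i := by
      rw [ha_eq i hi]
      have h1 : (B i * s i)⁻¹ * Real.log ((i : ℝ) ^ 2 * (sbar / s i)) ≤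
          max ((σ i / B i) * Real.sqrt (2 * Real.log (σ i / σbar) + 4 * Real.log i))
            ((B i * s i)⁻¹ * Real.log ((i : ℝ) ^ 2 * (sbar / s i))) := le_max_right _ _
      calc Real.log ((i:ℝ)^2 * (sbar / s i))
          = (B i * s i) * ((B i * s i)⁻¹ * Real.log ((i : ℝ) ^ 2 * (sbar / s i))) := by
            field_simp
        _ ≤ (B i * s i) * max ((σ i / B i) * Real.sqrt (2 * Real.log (σ i / σbar) + 4 * Real.log i))
            ((B i * s i)⁻¹ * Real.log ((i : ℝ) ^ 2 * (sbar / s i))) :=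
            mul_le_mul_of_nonneg_left h1 (by positivity)
        _ = B i * max ((σ i / B i) * Real.sqrt (2 * Real.log (σ i / σbar) + 4 * Real.log i))
            ((B i * s i)⁻¹ * Real.log ((i : ℝ) ^ 2 * (sbar / s i))) * s i := by ring
    calc exp (-(a i * s i)) ≤ exp (-(Real.log ((i:ℝ)^2 * (sbar / s i)))) :=
          exp_le_exp.2 (neg_le_neg hL)
      _ = ((i:ℝ)^2 * (sbar / s i))⁻¹ := by rw [Real.exp_neg, Real.exp_log hq]
      _ = s i / (sbar * (i:ℝ)^2) := by
          rw [mul_inv, inv_div]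
          ring
  -- the dominating per-index function
  set u : ℕ → ℝ → ℝ := fun i t =>
    C1 * (σbar / (σ i * (i:ℝ)^2)) * exp (-(2 * σ i ^ 2)⁻¹ * t ^ 2)
      + C2 * (s i / (sbar * (i:ℝ)^2)) * exp (-s i * t) with hu
  clear_value u
  -- Step A : pointwise tail bound
  have hA : ∀ t : ℝ, 0 < t →
      ℙ {ω | t < max (f ω) 0} ≤ ∑' i : {j : ℕ // 1 ≤ j}, ENNReal.ofReal (u i.1 t) := by
    intro t ht
    have hsub : {ω | t < max (f ω) 0} ⊆
        ⋃ i : {j : ℕ // 1 ≤ j}, {ω | t < X i.1 ω - B i.1 * θ i.1} := by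
      intro ω hω
      simp only [Set.mem_setOf_eq] at hω
      have hft : t < f ω := (lt_max_iff.mp hω).resolve_right (lt_asymm ht)
      simp only [hf] at hft
      obtain ⟨i, hi⟩ := exists_lt_of_lt_ciSup hft
      exact Set.mem_iUnion.2 ⟨i, hi⟩
    refine (measure_mono hsub).trans ((measure_iUnion_le _).trans ?_)
    refine ENNReal.tsum_le_tsum fun i => ?_
    obtain ⟨i, hi⟩ := i
    simp only
    have hBi := hB i hi
    have hσi := hσ i hi
    have hsi := hs i hi
    have hi0 : (0:ℝ) < (i:ℝ) := hipos i hi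
    have hτ : 0 < a i + t := by have := ha_nonneg i hi; linarith
    have hset : {ω | t < X i ω - B i * θ i} = {ω | X i ω - B i > a i + t} := by
      have hBθ : B i * θ i = a i + B i := by simp only [ha]; ring
      ext ω
      simp only [Set.mem_setOf_eq, gt_iff_lt]
      constructor <;> intro h <;> [linarith [hBθ]; linarith [hBθ]]
    rw [hset]
    have h1 : ℙ {ω | X i ω - B i > a i + t}
        ≤ ENNReal.ofReal (C1 * exp (-((a i + t) ^ 2) / (2 * σ i ^ 2))
            + C2 * exp (-((a i + t) * s i))) := by
      have h2 := htail i hi (a i + t) hτ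
      have h3 : ℙ {ω | X i ω - B i > a i + t} ≠ ⊤ := measure_ne_top _ _
      rw [← ENNReal.ofReal_toReal h3]
      exact ENNReal.ofReal_le_ofReal h2
    refine h1.trans (ENNReal.ofReal_le_ofReal ?_)
    have hC1' : (0:ℝ) ≤ σbar / (σ i * (i:ℝ)^2) := by positivity
    have e1 : exp (-((a i + t) ^ 2) / (2 * σ i ^ 2))
        ≤ (σbar / (σ i * (i:ℝ)^2)) * exp (-(2 * σ i ^ 2)⁻¹ * t ^ 2) := by
      have h2σ : (0:ℝ) < 2 * σ i ^ 2 := by positivity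
      have hq : -((a i + t) ^ 2) ≤ -(a i ^ 2) + -(t ^ 2) := by
        nlinarith [ha_nonneg i hi, ht.le]
      have hsplit : -((a i + t) ^ 2) / (2 * σ i ^ 2)
          ≤ -(a i ^ 2) / (2 * σ i ^ 2) + -(2 * σ i ^ 2)⁻¹ * t ^ 2 := by
        calc -((a i + t) ^ 2) / (2 * σ i ^ 2)
            ≤ (-(a i ^ 2) + -(t ^ 2)) / (2 * σ i ^ 2) := by
              apply div_le_div_of_nonneg_right hq h2σ.le
          _ = -(a i ^ 2) / (2 * σ i ^ 2) + -(2 * σ i ^ 2)⁻¹ * t ^ 2 := by ring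
      calc exp (-((a i + t) ^ 2) / (2 * σ i ^ 2))
          ≤ exp (-(a i ^ 2) / (2 * σ i ^ 2) + -(2 * σ i ^ 2)⁻¹ * t ^ 2) := exp_le_exp.2 hsplit
        _ = exp (-(a i ^ 2) / (2 * σ i ^ 2)) * exp (-(2 * σ i ^ 2)⁻¹ * t ^ 2) := exp_add _ _
        _ ≤ (σbar / (σ i * (i:ℝ)^2)) * exp (-(2 * σ i ^ 2)⁻¹ * t ^ 2) :=
            mul_le_mul_of_nonneg_right (L1 i hi) (exp_nonneg _)
    have e2 : exp (-((a i + t) * s i))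
        ≤ (s i / (sbar * (i:ℝ)^2)) * exp (-s i * t) := by
      have : -((a i + t) * s i) = -(a i * s i) + -s i * t := by ring
      rw [this, exp_add]
      exact mul_le_mul_of_nonneg_right (L2 i hi) (exp_nonneg _)
    have hfin := add_le_add (mul_le_mul_of_nonneg_left e1 hC1)
      (mul_le_mul_of_nonneg_left e2 hC2)
    calc C1 * exp (-((a i + t) ^ 2) / (2 * σ i ^ 2)) + C2 * exp (-((a i + t) * s i))
        ≤ C1 * ((σbar / (σ i * (i:ℝ)^2)) * exp (-(2 * σ i ^ 2)⁻¹ * t ^ 2))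
          + C2 * ((s i / (sbar * (i:ℝ)^2)) * exp (-s i * t)) := hfin
      _ = u i t := by simp only [hu]; ring
  -- Step C : per index integral bound
  set D : ℝ := 3/2 * C1 * σbar + C2 / sbar with hD
  clear_value D
  have hDnn : 0 ≤ D := by rw [hD]; positivity
  have hC : ∀ i : ℕ, 1 ≤ i →
      ∫⁻ t in Ioi (0:ℝ), ENNReal.ofReal (u i t) ≤ ENNReal.ofReal (D / (i:ℝ)^2) := by
    intro i hi
    have hσi := hσ i hi
    have hsi := hs i hi
    have hi0 : (0:ℝ) < (i:ℝ) := hipos i hi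
    have hb1 : (0:ℝ) < (2 * σ i ^ 2)⁻¹ := by positivity
    have hint1 : IntegrableOn (fun t : ℝ => exp (-(2 * σ i ^ 2)⁻¹ * t ^ 2)) (Ioi 0) :=
      (integrable_exp_neg_mul_sq hb1).integrableOn
    have hint2 : IntegrableOn (fun t : ℝ => exp (-s i * t)) (Ioi 0) :=
      exp_neg_integrableOn_Ioi 0 hsi
    have huint : IntegrableOn (fun t => u i t) (Ioi 0) := by
      simp only [hu]
      exact (hint1.const_mul _).add (hint2.const_mul _)
    have hunn : ∀ t, 0 ≤ u i t := by
      intro t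
      simp only [hu]
      have h1 : (0:ℝ) ≤ σbar / (σ i * (i:ℝ)^2) := by positivity
      have h2 : (0:ℝ) ≤ s i / (sbar * (i:ℝ)^2) := by positivity
      positivity
    have heq : ∫⁻ t in Ioi (0:ℝ), ENNReal.ofReal (u i t)
        = ENNReal.ofReal (∫ t in Ioi (0:ℝ), u i t) :=
      (ofReal_integral_eq_lintegral_ofReal huint (ae_of_all _ hunn)).symm
    rw [heq]
    apply ENNReal.ofReal_le_ofReal
    have hval : ∫ t in Ioi (0:ℝ), u i t
        = C1 * (σbar / (σ i * (i:ℝ)^2)) * (Real.sqrt (π / (2 * σ i ^ 2)⁻¹) / 2)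
          + C2 * (s i / (sbar * (i:ℝ)^2)) * (1 / s i) := by
      simp only [hu]
      rw [integral_add (hint1.const_mul _) (hint2.const_mul _),
        integral_const_mul, integral_const_mul, integral_gaussian_Ioi,
        aux_integral_exp_neg_mul hsi]
    rw [hval]
    have hsqrt : Real.sqrt (π / (2 * σ i ^ 2)⁻¹) ≤ 3 * σ i := by
      have h1 : π / (2 * σ i ^ 2)⁻¹ = 2 * π * σ i ^ 2 := by
        rw [div_inv_eq_mul]; ring
      rw [h1]
      have h2 : 2 * π * σ i ^ 2 ≤ (3 * σ i) ^ 2 := by nlinarith [pi_lt_d2]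
      calc Real.sqrt (2 * π * σ i ^ 2) ≤ Real.sqrt ((3 * σ i) ^ 2) := Real.sqrt_le_sqrt h2
        _ = 3 * σ i := Real.sqrt_sq (by positivity)
    have hterm1 : C1 * (σbar / (σ i * (i:ℝ)^2)) * (Real.sqrt (π / (2 * σ i ^ 2)⁻¹) / 2)
        ≤ 3/2 * C1 * σbar / (i:ℝ)^2 := by
      have h3 : C1 * (σbar / (σ i * (i:ℝ)^2)) * (Real.sqrt (π / (2 * σ i ^ 2)⁻¹) / 2)
          ≤ C1 * (σbar / (σ i * (i:ℝ)^2)) * (3 * σ i / 2) := by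
        apply mul_le_mul_of_nonneg_left _ (by positivity)
        linarith
      refine h3.trans (le_of_eq ?_)
      calc C1 * (σbar / (σ i * (i:ℝ)^2)) * (3 * σ i / 2)
          = (3/2 * C1 * σbar / (i:ℝ)^2) * (σ i / σ i) := by ring
        _ = 3/2 * C1 * σbar / (i:ℝ)^2 := by rw [div_self hσi.ne', mul_one]
    have hterm2 : C2 * (s i / (sbar * (i:ℝ)^2)) * (1 / s i) = C2 / sbar / (i:ℝ)^2 := by
      calc C2 * (s i / (sbar * (i:ℝ)^2)) * (1 / s i)
          = (C2 / sbar / (i:ℝ)^2) * (s i / s i) := by ring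
        _ = C2 / sbar / (i:ℝ)^2 := by rw [div_self hsi.ne', mul_one]
    rw [hterm2, hD]
    have : (3/2 * C1 * σbar + C2 / sbar) / (i:ℝ)^2
        = 3/2 * C1 * σbar / (i:ℝ)^2 + C2 / sbar / (i:ℝ)^2 := by ring
    rw [this]
    exact add_le_add hterm1 le_rfl
  -- Step D : summing
  have hDsum : ∑' i : {j : ℕ // 1 ≤ j}, ENNReal.ofReal (D / ((i.1:ℕ):ℝ)^2)
      ≤ ENNReal.ofReal (3 * C1 * σbar + 2 * C2 / sbar) := by
    have hsummable : Summable (fun n : ℕ => (1:ℝ) / (n:ℝ) ^ 2) := hasSum_zeta_two.summable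
    have h1 : ∀ i : {j : ℕ // 1 ≤ j}, ENNReal.ofReal (D / ((i.1:ℕ):ℝ)^2)
        = ENNReal.ofReal D * ENNReal.ofReal ((1:ℝ) / (i.1:ℝ)^2) := by
      intro i
      rw [← ENNReal.ofReal_mul hDnn]
      congr 1
      ring
    calc ∑' i : {j : ℕ // 1 ≤ j}, ENNReal.ofReal (D / ((i.1:ℕ):ℝ)^2)
        = ENNReal.ofReal D * ∑' i : {j : ℕ // 1 ≤ j}, ENNReal.ofReal ((1:ℝ) / (i.1:ℝ)^2) := by
          rw [← ENNReal.tsum_mul_left]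
          exact tsum_congr h1
      _ ≤ ENNReal.ofReal D * ∑' n : ℕ, ENNReal.ofReal ((1:ℝ) / (n:ℝ)^2) := by
          apply mul_le_mul_right
          calc (∑' i : {j : ℕ // 1 ≤ j}, ENNReal.ofReal ((1:ℝ) / (i.1:ℝ)^2))
              = ∑' n : ℕ, Set.indicator {j : ℕ | 1 ≤ j}
                  (fun n : ℕ => ENNReal.ofReal ((1:ℝ) / (n:ℝ)^2)) n :=
                tsum_subtype {j : ℕ | 1 ≤ j} (fun n : ℕ => ENNReal.ofReal ((1:ℝ) / (n:ℝ)^2))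
            _ ≤ ∑' n : ℕ, ENNReal.ofReal ((1:ℝ) / (n:ℝ)^2) :=
                ENNReal.tsum_le_tsum fun n => Set.indicator_le_self _ _ n
      _ = ENNReal.ofReal D * ENNReal.ofReal (π ^ 2 / 6) := by
          rw [← ENNReal.ofReal_tsum_of_nonneg (f := fun n : ℕ => (1:ℝ)/(n:ℝ)^2) (fun n => by positivity) hsummable,
            hasSum_zeta_two.tsum_eq]
      _ = ENNReal.ofReal (D * (π ^ 2 / 6)) := (ENNReal.ofReal_mul hDnn).symm
      _ ≤ ENNReal.ofReal (3 * C1 * σbar + 2 * C2 / sbar) := by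
          apply ENNReal.ofReal_le_ofReal
          have hπ : π ^ 2 / 6 ≤ 2 := aux_pi_sq_div_six_le_two
          have h2 : D * (π ^ 2 / 6) ≤ D * 2 := by
            apply mul_le_mul_of_nonneg_left hπ hDnn
          refine h2.trans (le_of_eq ?_)
          rw [hD]
          ring
  -- measurability of the dominating functions
  have humeas : ∀ i : ℕ, Measurable fun t => ENNReal.ofReal (u i t) := by
    intro i
    apply ENNReal.measurable_ofReal.comp
    simp only [hu]
    apply Continuous.measurable
    apply Continuous.add
    · exact continuous_const.mul (Real.continuous_exp.comp
        (continuous_const.mul (continuous_pow 2)))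
    · exact continuous_const.mul (Real.continuous_exp.comp
        (continuous_const.mul continuous_id))
  -- assemble
  have hZ : Integrable (fun ω => max (f ω) 0) ℙ := hint.pos_part
  have step1 : ∫ ω, f ω ∂ℙ ≤ ∫ ω, max (f ω) 0 ∂ℙ :=
    integral_mono hint hZ fun ω => le_max_left _ _
  have step2 : ∫ ω, max (f ω) 0 ∂ℙ
      = (∫⁻ ω, ENNReal.ofReal (max (f ω) 0) ∂ℙ).toReal :=
    integral_eq_lintegral_of_nonneg_ae (ae_of_all ℙ fun ω => le_max_right _ _)
      hZ.aestronglyMeasurable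
  have step3 : ∫⁻ ω, ENNReal.ofReal (max (f ω) 0) ∂ℙ
      = ∫⁻ t in Ioi (0:ℝ), ℙ {ω | t < max (f ω) 0} :=
    lintegral_eq_lintegral_meas_lt ℙ (ae_of_all ℙ fun ω => le_max_right _ _)
      hZ.aemeasurable
  have key : ∫⁻ t in Ioi (0:ℝ), ℙ {ω | t < max (f ω) 0}
      ≤ ENNReal.ofReal (3 * C1 * σbar + 2 * C2 / sbar) := by
    calc ∫⁻ t in Ioi (0:ℝ), ℙ {ω | t < max (f ω) 0}
        ≤ ∫⁻ t in Ioi (0:ℝ), ∑' i : {j : ℕ // 1 ≤ j}, ENNReal.ofReal (u i.1 t) := by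
          refine lintegral_mono_ae ?_
          filter_upwards [ae_restrict_mem measurableSet_Ioi] with t ht
          exact hA t ht
      _ = ∑' i : {j : ℕ // 1 ≤ j}, ∫⁻ t in Ioi (0:ℝ), ENNReal.ofReal (u i.1 t) :=
          lintegral_tsum fun i => (humeas i.1).aemeasurable
      _ ≤ ∑' i : {j : ℕ // 1 ≤ j}, ENNReal.ofReal (D / ((i.1:ℕ):ℝ)^2) :=
          ENNReal.tsum_le_tsum fun i => hC i.1 i.2
      _ ≤ ENNReal.ofReal (3 * C1 * σbar + 2 * C2 / sbar) := hDsum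
  calc ∫ ω, f ω ∂ℙ ≤ ∫ ω, max (f ω) 0 ∂ℙ := step1
    _ = (∫⁻ ω, ENNReal.ofReal (max (f ω) 0) ∂ℙ).toReal := step2
    _ ≤ 3 * C1 * σbar + 2 * C2 / sbar := by
        rw [step3]
        exact ENNReal.toReal_le_of_le_ofReal hR key
end

section
/- Pinelis-type deviation for 2-smooth Banach spaces: let H be a separable (2,D)-smooth Banach space, z_1,…,z_n a predictable process with respect to the filtration generated by i.i.d. Rademacher variables ε_1,…,ε_n (i.e., z_t depends only on ε_1,…,ε_{t−1}), with ‖z_t‖ ≤ 1 always. Then for any τ with n > τ/(4D²), P( ‖Σ_t ε_t z_t‖ ≥ τ ) ≤ 2·exp( −τ²/(8D²n) ). As a corollary in a Hilbert space (D = 1): P(‖Σ_t ε_t z_t‖ ≥ τ) ≤ 2 exp(−τ²/(8n)) for n > τ/4. -/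
open Real Finset Nat

lemma choose_le_two_mul (n k : ℕ) (h : k ≤ n) : n.choose k ≤ (2 * n).choose (2 * k) := by
  have hv : (n + n).choose (k + k) = ∑ ij ∈ Finset.HasAntidiagonal.antidiagonal (k + k),
      n.choose ij.1 * n.choose ij.2 := Nat.add_choose_eq n n (k + k)
  have hmem : ((k, k) : ℕ × ℕ) ∈ Finset.HasAntidiagonal.antidiagonal (k + k) := by
    simp [Finset.mem_antidiagonal]
  have h1 : n.choose k * n.choose k ≤ (n + n).choose (k + k) := by
    rw [hv]
    exact Finset.single_le_sum (f := fun ij : ℕ × ℕ => n.choose ij.1 * n.choose ij.2)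
      (fun i _ => Nat.zero_le _) hmem
  have hpos : 1 ≤ n.choose k := Nat.choose_pos h
  calc n.choose k ≤ n.choose k * n.choose k := Nat.le_mul_of_pos_right _ (by omega)
    _ ≤ (n + n).choose (k + k) := h1
    _ = (2 * n).choose (2 * k) := by ring_nf

lemma cosh_sqrt_hasSum (u : ℝ) (hu : 0 ≤ u) :
    HasSum (fun m : ℕ => u ^ m / ↑(2 * m)!) (cosh (Real.sqrt u)) := by
  have := Real.hasSum_cosh (Real.sqrt u)
  refine this.congr_fun fun m => ?_
  rw [pow_mul, Real.sq_sqrt hu]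

lemma cosh_sqrt_add_le (u v : ℝ) (hu : 0 ≤ u) (hv : 0 ≤ v) :
    cosh (Real.sqrt (u + v)) ≤ cosh (Real.sqrt u) * cosh (Real.sqrt v) := by
  have hsu := cosh_sqrt_hasSum u hu
  have hsv := cosh_sqrt_hasSum v hv
  have hsum := cosh_sqrt_hasSum (u + v) (by linarith)
  have hnu : Summable fun m : ℕ => ‖u ^ m / ↑(2 * m)!‖ := by
    refine hsu.summable.congr fun m => ?_
    rw [Real.norm_eq_abs, abs_of_nonneg (by positivity)]
  have hnv : Summable fun m : ℕ => ‖v ^ m / ↑(2 * m)!‖ := by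
    refine hsv.summable.congr fun m => ?_
    rw [Real.norm_eq_abs, abs_of_nonneg (by positivity)]
  have hprod : cosh (Real.sqrt u) * cosh (Real.sqrt v) =
      ∑' m : ℕ, ∑ ij ∈ Finset.HasAntidiagonal.antidiagonal m,
        (u ^ ij.1 / ↑(2 * ij.1)!) * (v ^ ij.2 / ↑(2 * ij.2)!) := by
    rw [← hsu.tsum_eq, ← hsv.tsum_eq]
    exact tsum_mul_tsum_eq_tsum_sum_antidiagonal_of_summable_norm hnu hnv
  rw [hprod, ← hsum.tsum_eq]
  refine Summable.tsum_le_tsum (fun m => ?_) hsum.summable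
    ((summable_norm_sum_mul_antidiagonal_of_summable_norm hnu hnv).of_norm)
  -- termwise
  rw [add_pow, Finset.sum_div]
  rw [Finset.Nat.sum_antidiagonal_eq_sum_range_succ_mk]
  refine Finset.sum_le_sum fun k hk => ?_
  have hkm : k ≤ m := by
    simp only [Finset.mem_range] at hk; omega
  have hchoose : (m.choose k) * (2 * k)! * (2 * (m - k))! ≤ (2 * m)! := by
    have h1 : m.choose k ≤ (2 * m).choose (2 * k) := choose_le_two_mul m k hkm
    have h2 : (2 * m).choose (2 * k) * (2 * k)! * (2 * m - 2 * k)! = (2 * m)! :=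
      Nat.choose_mul_factorial_mul_factorial (by omega)
    calc m.choose k * (2 * k)! * (2 * (m - k))!
        ≤ (2 * m).choose (2 * k) * (2 * k)! * (2 * (m - k))! := by
          exact Nat.mul_le_mul_right _ (Nat.mul_le_mul_right _ h1)
      _ = (2 * m)! := by rw [← h2]; congr 2; omega
  -- now the real inequality
  have hfac1 : (0:ℝ) < (2 * k)! := by positivity
  have hfac2 : (0:ℝ) < (2 * (m - k))! := by positivity
  have hfacm : (0:ℝ) < (2 * m)! := by positivity
  simp only []
  rw [_root_.div_mul_div_comm, div_le_div_iff₀ hfacm (by positivity)]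
  have hun : (0:ℝ) ≤ u ^ k * v ^ (m - k) := by positivity
  have hch : ((m.choose k : ℕ) : ℝ) * ((((2 * k)!) : ℕ) : ℝ) * ((((2 * (m - k))!) : ℕ) : ℝ)
      ≤ ((((2 * m)!) : ℕ) : ℝ) := by exact_mod_cast hchoose
  calc u ^ k * v ^ (m - k) * ↑(m.choose k) * (↑(2 * k)! * ↑(2 * (m-k))!)
      = (u ^ k * v ^ (m - k)) * (↑(m.choose k) * ↑(2 * k)! * ↑(2 * (m-k))!) := by ring
    _ ≤ (u ^ k * v ^ (m - k)) * ↑(2 * m)! := by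
        exact mul_le_mul_of_nonneg_left hch hun
    _ = u ^ k * v ^ (m - k) * ↑(2 * m)! := by ring

lemma cosh_qm_le (lam c d m : ℝ) (hlam : 0 ≤ lam) (hc : 0 ≤ c) (hd : 0 ≤ d)
    (hm : 0 ≤ m) (hm2 : m ^ 2 ≤ c ^ 2 + d ^ 2) :
    cosh (lam * m) ≤ cosh (lam * c) * exp (lam ^ 2 * d ^ 2 / 2) := by
  have h1 : m ≤ Real.sqrt (c ^ 2 + d ^ 2) := by
    rw [show m = Real.sqrt (m ^ 2) by rw [Real.sqrt_sq hm]]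
    exact Real.sqrt_le_sqrt hm2
  have h2 : cosh (lam * m) ≤ cosh (lam * Real.sqrt (c ^ 2 + d ^ 2)) := by
    rw [Real.cosh_le_cosh]
    rw [abs_of_nonneg (by positivity), abs_of_nonneg (by positivity)]
    exact mul_le_mul_of_nonneg_left h1 hlam
  have h3 : lam * Real.sqrt (c ^ 2 + d ^ 2) = Real.sqrt (lam ^ 2 * c ^ 2 + lam ^ 2 * d ^ 2) := by
    rw [show lam ^ 2 * c ^ 2 + lam ^ 2 * d ^ 2 = lam ^ 2 * (c ^ 2 + d ^ 2) by ring,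
      Real.sqrt_mul (by positivity), Real.sqrt_sq hlam]
  have h4 : cosh (Real.sqrt (lam ^ 2 * c ^ 2 + lam ^ 2 * d ^ 2))
      ≤ cosh (Real.sqrt (lam ^ 2 * c ^ 2)) * cosh (Real.sqrt (lam ^ 2 * d ^ 2)) :=
    cosh_sqrt_add_le _ _ (by positivity) (by positivity)
  have h5 : Real.sqrt (lam ^ 2 * c ^ 2) = lam * c := by
    rw [show lam ^ 2 * c ^ 2 = (lam * c) ^ 2 by ring, Real.sqrt_sq (by positivity)]
  have h6 : Real.sqrt (lam ^ 2 * d ^ 2) = lam * d := by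
    rw [show lam ^ 2 * d ^ 2 = (lam * d) ^ 2 by ring, Real.sqrt_sq (by positivity)]
  have h7 : cosh (lam * d) ≤ exp (lam ^ 2 * d ^ 2 / 2) := by
    have := Real.cosh_le_exp_half_sq (lam * d)
    rwa [show (lam * d) ^ 2 / 2 = lam ^ 2 * d ^ 2 / 2 by ring] at this
  calc cosh (lam * m) ≤ cosh (lam * Real.sqrt (c ^ 2 + d ^ 2)) := h2
    _ = cosh (Real.sqrt (lam ^ 2 * c ^ 2 + lam ^ 2 * d ^ 2)) := by rw [h3]
    _ ≤ cosh (Real.sqrt (lam ^ 2 * c ^ 2)) * cosh (Real.sqrt (lam ^ 2 * d ^ 2)) := h4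
    _ = cosh (lam * c) * cosh (lam * d) := by rw [h5, h6]
    _ ≤ cosh (lam * c) * exp (lam ^ 2 * d ^ 2 / 2) :=
        mul_le_mul_of_nonneg_left h7 (le_of_lt (Real.cosh_pos _))

lemma cosh_add_cosh_eq (p q : ℝ) :
    cosh p + cosh q = 2 * cosh ((p + q) / 2) * cosh ((p - q) / 2) := by
  have h1 := Real.cosh_add ((p + q) / 2) ((p - q) / 2)
  have h2 := Real.cosh_sub ((p + q) / 2) ((p - q) / 2)
  have e1 : (p + q) / 2 + (p - q) / 2 = p := by ring
  have e2 : (p + q) / 2 - (p - q) / 2 = q := by ring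
  rw [e1] at h1; rw [e2] at h2
  linarith

lemma pinelis_step {H : Type*} [NormedAddCommGroup H] [NormedSpace ℝ H]
    (D : ℝ) (hD1 : 1 ≤ D)
    (hsmooth : ∀ x y : H, ‖x + y‖ ^ 2 + ‖x - y‖ ^ 2 ≤ 2 * ‖x‖ ^ 2 + 2 * D ^ 2 * ‖y‖ ^ 2)
    (lam : ℝ) (hlam : 0 ≤ lam) (x y : H) (hy : ‖y‖ ≤ 1) :
    cosh (lam * ‖x + y‖) + cosh (lam * ‖x - y‖)
      ≤ 2 * cosh (lam * ‖x‖) * exp (lam ^ 2 * D ^ 2) := by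
  set a := ‖x + y‖ with ha
  set b := ‖x - y‖ with hb
  set c := ‖x‖ with hc
  have ha0 : 0 ≤ a := norm_nonneg _
  have hb0 : 0 ≤ b := norm_nonneg _
  have hc0 : 0 ≤ c := norm_nonneg _
  have habs : |a - b| ≤ 2 := by
    have h1 : |a - b| ≤ ‖(x + y) - (x - y)‖ := abs_norm_sub_norm_le _ _
    have h2 : (x + y) - (x - y) = y + y := by abel
    have h3 : ‖y + y‖ ≤ ‖y‖ + ‖y‖ := norm_add_le _ _
    rw [h2] at h1
    linarith
  have hD0 : (0:ℝ) ≤ D := by linarith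
  -- identity
  have hid : cosh (lam * a) + cosh (lam * b)
      = 2 * cosh (lam * ((a + b) / 2)) * cosh (lam * ((a - b) / 2)) := by
    have := cosh_add_cosh_eq (lam * a) (lam * b)
    rw [this]
    congr 2 <;> ring_nf
  rw [hid]
  -- bound second factor
  have hf2 : cosh (lam * ((a - b) / 2)) ≤ exp (lam ^ 2 * D ^ 2 / 2) := by
    have hle : cosh (lam * ((a - b) / 2)) ≤ cosh lam := by
      rw [Real.cosh_le_cosh]
      have : |lam * ((a - b) / 2)| = lam * (|a - b| / 2) := by
        rw [abs_mul, abs_of_nonneg hlam, abs_div]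
        norm_num
      rw [this, abs_of_nonneg hlam]
      nlinarith [habs, hlam]
    have h1 : cosh lam ≤ exp (lam ^ 2 / 2) := Real.cosh_le_exp_half_sq lam
    have h2 : exp (lam ^ 2 / 2) ≤ exp (lam ^ 2 * D ^ 2 / 2) := by
      apply Real.exp_le_exp.2
      have hD2 : 1 ≤ D ^ 2 := by nlinarith
      nlinarith [sq_nonneg lam, mul_le_mul_of_nonneg_left hD2 (sq_nonneg lam)]
    linarith
  -- bound first factor
  have hm0 : 0 ≤ (a + b) / 2 := by linarith
  have hm2 : ((a + b) / 2) ^ 2 ≤ c ^ 2 + D ^ 2 := by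
    have hsm := hsmooth x y
    have hy2 : ‖y‖ ^ 2 ≤ 1 := by nlinarith [norm_nonneg y]
    nlinarith [sq_nonneg (a - b), sq_nonneg D]
  have hf1 : cosh (lam * ((a + b) / 2)) ≤ cosh (lam * c) * exp (lam ^ 2 * D ^ 2 / 2) :=
    cosh_qm_le lam c D ((a + b) / 2) hlam hc0 hD0 hm0 hm2
  calc 2 * cosh (lam * ((a + b) / 2)) * cosh (lam * ((a - b) / 2))
      ≤ 2 * (cosh (lam * c) * exp (lam ^ 2 * D ^ 2 / 2)) * exp (lam ^ 2 * D ^ 2 / 2) := by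
        apply mul_le_mul
        · exact mul_le_mul_of_nonneg_left hf1 (by norm_num)
        · exact hf2
        · exact le_of_lt (Real.cosh_pos _)
        · positivity
    _ = 2 * cosh (lam * c) * exp (lam ^ 2 * D ^ 2) := by
        rw [mul_assoc, mul_assoc, mul_assoc, ← Real.exp_add]
        ring_nf

lemma tree_bound {H : Type*} [NormedAddCommGroup H] [NormedSpace ℝ H]
    (n : ℕ) (lam K : ℝ) (hK : 1 ≤ K)
    (w : (Fin n → Bool) → Fin n → H)
    (hw2 : ∀ (t : Fin n) (σ σ' : Fin n → Bool), (∀ s : Fin n, s < t → σ s = σ' s) →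
      w σ t = w σ' t)
    (hw1 : ∀ σ t, ‖w σ t‖ ≤ 1)
    (hstep : ∀ x y : H, ‖y‖ ≤ 1 →
      cosh (lam * ‖x + y‖) + cosh (lam * ‖x - y‖) ≤ 2 * cosh (lam * ‖x‖) * K)
    (k : ℕ) (hk : k ≤ n) :
    ∑ σ : Fin n → Bool,
      cosh (lam * ‖∑ t ∈ Finset.univ.filter (fun t : Fin n => (t : ℕ) < k),
        (if σ t then (1:ℝ) else -1) • w σ t‖) ≤ 2 ^ n * K ^ k := by
  induction k with
  | zero =>
    have hempty : (Finset.univ.filter (fun t : Fin n => (t : ℕ) < 0)) = ∅ := by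
      apply Finset.filter_false_of_mem; intro t _; omega
    simp only [hempty, Finset.sum_empty, norm_zero, mul_zero, Real.cosh_zero]
    rw [Finset.sum_const, Finset.card_univ, Fintype.card_fun]
    simp
  | succ k ih =>
    have hk' : k < n := hk
    have hkn : k ≤ n := le_of_lt hk'
    set t₀ : Fin n := ⟨k, hk'⟩ with ht₀
    -- notation
    set sgn : Bool → ℝ := fun b => if b then (1:ℝ) else -1 with hsgn
    set A : (Fin n → Bool) → H := fun σ =>
      ∑ t ∈ Finset.univ.filter (fun t : Fin n => (t : ℕ) < k), sgn (σ t) • w σ t with hA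
    set cc : (Fin n → Bool) → H := fun σ => sgn (σ t₀) • w σ t₀ with hcc
    have hfilter : Finset.univ.filter (fun t : Fin n => (t : ℕ) < k + 1)
        = insert t₀ (Finset.univ.filter (fun t : Fin n => (t : ℕ) < k)) := by
      ext t
      simp only [Finset.mem_filter, Finset.mem_insert, Finset.mem_univ, true_and]
      constructor
      · intro h
        by_cases he : t = t₀
        · left; exact he
        · right
          have : (t : ℕ) ≠ k := fun hh => he (Fin.ext hh)
          omega
      · rintro (rfl | h)
        · simp [ht₀]
        · omega
    have ht₀notmem : t₀ ∉ Finset.univ.filter (fun t : Fin n => (t : ℕ) < k) := by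
      simp [Finset.mem_filter, ht₀]
    have hsplit : ∀ σ : Fin n → Bool,
        ∑ t ∈ Finset.univ.filter (fun t : Fin n => (t : ℕ) < k + 1), sgn (σ t) • w σ t
          = A σ + cc σ := by
      intro σ
      rw [hfilter, Finset.sum_insert ht₀notmem]
      rw [add_comm]
    -- the flip involution
    set e : (Fin n → Bool) → (Fin n → Bool) := fun σ => Function.update σ t₀ (!σ t₀) with he
    have hinv : Function.Involutive e := by
      intro σ
      funext s
      by_cases hs : s = t₀
      · subst hs; simp [he, Function.update_self]
      · simp [he, Function.update_of_ne hs]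
    have hAe : ∀ σ, A (e σ) = A σ := by
      intro σ
      apply Finset.sum_congr rfl
      intro t ht
      simp only [Finset.mem_filter] at ht
      have htne : t ≠ t₀ := by
        intro hh
        have h2 := ht.2
        rw [hh] at h2
        have hv : (t₀ : ℕ) = k := rfl
        omega
      have h1 : e σ t = σ t := Function.update_of_ne htne _ _
      have h2 : w (e σ) t = w σ t := by
        apply hw2
        intro s hs
        have : s ≠ t₀ := by
          intro hh
          rw [hh] at hs
          have h2 := ht.2
          have hlt : (t₀ : ℕ) < (t : ℕ) := hs
          have hv : (t₀ : ℕ) = k := rfl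
          omega
        exact Function.update_of_ne this _ _
      rw [h1, h2]
    have hce : ∀ σ, cc (e σ) = - cc σ := by
      intro σ
      have h1 : e σ t₀ = !σ t₀ := Function.update_self _ _ _
      have h2 : w (e σ) t₀ = w σ t₀ := by
        apply hw2
        intro s hs
        have : s ≠ t₀ := ne_of_lt hs
        exact Function.update_of_ne this _ _
      simp only [hcc, h1, h2]
      cases σ t₀ <;> simp [hsgn]
    -- pairing
    have hpair : (2:ℝ) * ∑ σ : Fin n → Bool, cosh (lam * ‖A σ + cc σ‖)
        = ∑ σ : Fin n → Bool, (cosh (lam * ‖A σ + cc σ‖) + cosh (lam * ‖A σ - cc σ‖)) := by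
      rw [Finset.sum_add_distrib, two_mul]
      congr 1
      refine Fintype.sum_bijective e hinv.bijective
        (fun σ => cosh (lam * ‖A σ + cc σ‖)) (fun σ => cosh (lam * ‖A σ - cc σ‖))
        (fun σ => ?_)
      show cosh (lam * ‖A σ + cc σ‖) = cosh (lam * ‖A (e σ) - cc (e σ)‖)
      rw [hAe σ, hce σ, sub_neg_eq_add]
    have hbound : ∀ σ : Fin n → Bool,
        cosh (lam * ‖A σ + cc σ‖) + cosh (lam * ‖A σ - cc σ‖)
          ≤ 2 * cosh (lam * ‖A σ‖) * K := by
      intro σ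
      apply hstep
      have : ‖cc σ‖ ≤ |sgn (σ t₀)| * ‖w σ t₀‖ := by
        rw [hcc]; rw [norm_smul]; rw [Real.norm_eq_abs]
      have habs : |sgn (σ t₀)| = 1 := by cases σ t₀ <;> simp [hsgn]
      calc ‖cc σ‖ ≤ |sgn (σ t₀)| * ‖w σ t₀‖ := this
        _ = ‖w σ t₀‖ := by rw [habs, one_mul]
        _ ≤ 1 := hw1 σ t₀
    -- combine
    have step1 : (2:ℝ) * ∑ σ : Fin n → Bool, cosh (lam * ‖A σ + cc σ‖)
        ≤ 2 * K * ∑ σ : Fin n → Bool, cosh (lam * ‖A σ‖) := by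
      rw [hpair]
      calc ∑ σ : Fin n → Bool, (cosh (lam * ‖A σ + cc σ‖) + cosh (lam * ‖A σ - cc σ‖))
          ≤ ∑ σ : Fin n → Bool, 2 * cosh (lam * ‖A σ‖) * K :=
            Finset.sum_le_sum (fun σ _ => hbound σ)
        _ = 2 * K * ∑ σ : Fin n → Bool, cosh (lam * ‖A σ‖) := by
            rw [Finset.mul_sum]; apply Finset.sum_congr rfl; intro σ _; ring
    have ihh := ih hkn
    have hsum_le : ∑ σ : Fin n → Bool, cosh (lam * ‖A σ‖) ≤ 2 ^ n * K ^ k := ihh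
    have hKpos : (0:ℝ) < K := lt_of_lt_of_le one_pos hK
    calc ∑ σ : Fin n → Bool,
        cosh (lam * ‖∑ t ∈ Finset.univ.filter (fun t : Fin n => (t : ℕ) < k + 1),
          (if σ t then (1:ℝ) else -1) • w σ t‖)
        = ∑ σ : Fin n → Bool, cosh (lam * ‖A σ + cc σ‖) := by
          apply Finset.sum_congr rfl; intro σ _; rw [hsplit σ]
      _ ≤ K * ∑ σ : Fin n → Bool, cosh (lam * ‖A σ‖) := by linarith
      _ ≤ K * (2 ^ n * K ^ k) := by
          apply mul_le_mul_of_nonneg_left hsum_le (le_of_lt hKpos)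
      _ = 2 ^ n * K ^ (k + 1) := by ring


open MeasureTheory ProbabilityTheory

/-- Pinelis-type deviation inequality for a Rademacher-predictable process with values in
the unit ball of a separable (2,D)-smooth Banach space. -/
theorem stmt16 {Ω H : Type*} [MeasurableSpace Ω] (μ : Measure Ω) [IsProbabilityMeasure μ]
    [NormedAddCommGroup H] [NormedSpace ℝ H] [TopologicalSpace.SeparableSpace H]
    (D : ℝ) (hD : 0 < D)
    (hsmooth : ∀ x y : H, ‖x + y‖ ^ 2 + ‖x - y‖ ^ 2 ≤ 2 * ‖x‖ ^ 2 + 2 * D ^ 2 * ‖y‖ ^ 2)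
    (n : ℕ) (ε : Fin n → Ω → ℝ) (hmeas : ∀ t, Measurable (ε t))
    (hindep : iIndepFun ε μ)
    (hlaw : ∀ t, μ {ω | ε t ω = 1} = 1 / 2 ∧ μ {ω | ε t ω = -1} = 1 / 2)
    (z : Fin n → Ω → H) (hz : ∀ t ω, ‖z t ω‖ ≤ 1)
    (hpred : ∀ t : Fin n, ∀ ω ω' : Ω, (∀ s : Fin n, s < t → ε s ω = ε s ω') →
      z t ω = z t ω')
    (τ : ℝ) (hτ : 0 < τ) (hn : (n : ℝ) > τ / (4 * D ^ 2)) :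
    μ {ω | ‖∑ t, ε t ω • z t ω‖ ≥ τ}
      ≤ ENNReal.ofReal (2 * exp (-(τ ^ 2) / (8 * D ^ 2 * n))) := by
  classical
  rcases subsingleton_or_nontrivial H with hH | hH
  · have hempty : {ω | ‖∑ t, ε t ω • z t ω‖ ≥ τ} = ∅ := by
      ext ω
      simp only [Set.mem_setOf_eq, Set.mem_empty_iff_false, iff_false]
      have h0 : (∑ t, ε t ω • z t ω) = 0 := Subsingleton.elim _ _
      rw [h0, norm_zero]
      intro h
      linarith
    rw [hempty]
    simp
  obtain ⟨x0, hx0⟩ := exists_ne (0 : H)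
  have hx0pos : 0 < ‖x0‖ := norm_pos_iff.2 hx0
  have hD1 : 1 ≤ D := by
    have hsm := hsmooth x0 x0
    have h1 : ‖x0 + x0‖ = 2 * ‖x0‖ := by
      rw [← two_smul ℝ x0, norm_smul]
      simp
    rw [h1, sub_self, norm_zero] at hsm
    have hD2 : 1 ≤ D ^ 2 := by nlinarith [mul_pos hx0pos hx0pos, sq_nonneg ‖x0‖]
    nlinarith [hD2, hD]
  have hτD : 0 < τ / (4 * D ^ 2) := by positivity
  have hnR : (0:ℝ) < n := lt_trans hτD hn
  have hn0 : 0 < n := by exact_mod_cast hnR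
  set lam : ℝ := τ / (2 * D ^ 2 * n) with hlam_def
  have hlam : 0 < lam := by positivity
  set K : ℝ := exp (lam ^ 2 * D ^ 2) with hK_def
  have hK : 1 ≤ K := Real.one_le_exp (by positivity)
  set sgn : Bool → ℝ := fun b => if b then (1:ℝ) else -1 with hsgn
  -- the predictable tree read off from z
  set zz : (Fin n → Bool) → Fin n → H := fun σ t =>
    if h : ∃ ω, ∀ s : Fin n, s < t → ε s ω = sgn (σ s) then z t h.choose else 0 with hzz
  have hzz1 : ∀ σ t, ‖zz σ t‖ ≤ 1 := by
    intro σ t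
    simp only [hzz]
    by_cases h : ∃ ω, ∀ s : Fin n, s < t → ε s ω = sgn (σ s)
    · rw [dif_pos h]; exact hz t _
    · rw [dif_neg h]; simp
  have hzz2 : ∀ (t : Fin n) (σ σ' : Fin n → Bool), (∀ s : Fin n, s < t → σ s = σ' s) →
      zz σ t = zz σ' t := by
    intro t σ σ' hagree
    simp only [hzz]
    by_cases h : ∃ ω, ∀ s : Fin n, s < t → ε s ω = sgn (σ s)
    · have h' : ∃ ω, ∀ s : Fin n, s < t → ε s ω = sgn (σ' s) := by
        obtain ⟨ω, hω⟩ := h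
        exact ⟨ω, fun s hs => by rw [hω s hs, hagree s hs]⟩
      rw [dif_pos h, dif_pos h']
      apply hpred t
      intro s hs
      rw [h.choose_spec s hs, h'.choose_spec s hs, hagree s hs]
    · have h' : ¬ ∃ ω, ∀ s : Fin n, s < t → ε s ω = sgn (σ' s) := by
        intro hc
        obtain ⟨ω, hω⟩ := hc
        exact h ⟨ω, fun s hs => by rw [hω s hs, hagree s hs]⟩
      rw [dif_neg h, dif_neg h']
  set S : (Fin n → Bool) → H := fun σ =>
    ∑ t ∈ Finset.univ.filter (fun t : Fin n => (t : ℕ) < n),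
      (if σ t then (1:ℝ) else -1) • zz σ t with hS
  set B : Finset (Fin n → Bool) := Finset.univ.filter (fun σ => τ ≤ ‖S σ‖) with hB
  -- counting bound via the tree lemma
  have htree : ∑ σ : Fin n → Bool, cosh (lam * ‖S σ‖) ≤ 2 ^ n * K ^ n :=
    tree_bound n lam K hK zz hzz2 hzz1
      (fun x y hy => pinelis_step D hD1 hsmooth lam hlam.le x y hy) n le_rfl
  have hcosh_tau : exp (lam * τ) / 2 ≤ cosh (lam * τ) := by
    rw [Real.cosh_eq]
    have := Real.exp_pos (-(lam * τ))
    linarith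
  have hmarkov : (B.card : ℝ) * cosh (lam * τ) ≤ 2 ^ n * K ^ n := by
    calc (B.card : ℝ) * cosh (lam * τ) = ∑ _σ ∈ B, cosh (lam * τ) := by
          rw [Finset.sum_const, nsmul_eq_mul]
      _ ≤ ∑ σ ∈ B, cosh (lam * ‖S σ‖) := by
          apply Finset.sum_le_sum
          intro σ hσ
          simp only [hB, Finset.mem_filter] at hσ
          rw [Real.cosh_le_cosh, abs_of_nonneg (by positivity),
            abs_of_nonneg (by positivity)]
          exact mul_le_mul_of_nonneg_left hσ.2 hlam.le
      _ ≤ ∑ σ : Fin n → Bool, cosh (lam * ‖S σ‖) := by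
          apply Finset.sum_le_sum_of_subset_of_nonneg (Finset.subset_univ _)
          intro σ _ _
          exact (Real.cosh_pos _).le
      _ ≤ 2 ^ n * K ^ n := htree
  have hcard : (B.card : ℝ) * (1/2) ^ n ≤ 2 * exp ((n : ℝ) * (lam ^ 2 * D ^ 2) - lam * τ) := by
    have he : (0:ℝ) < exp (lam * τ) / 2 := by positivity
    have h1 : (B.card : ℝ) * (exp (lam * τ) / 2) ≤ 2 ^ n * K ^ n :=
      le_trans (mul_le_mul_of_nonneg_left hcosh_tau (Nat.cast_nonneg _)) hmarkov
    have h2 : (B.card : ℝ) ≤ 2 ^ n * K ^ n * 2 * exp (-(lam * τ)) := by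
      rw [Real.exp_neg]
      rw [← le_div_iff₀ he] at h1
      calc (B.card : ℝ) ≤ 2 ^ n * K ^ n / (exp (lam * τ) / 2) := h1
        _ = 2 ^ n * K ^ n * 2 * (exp (lam * τ))⁻¹ := by
            field_simp
    have h3 : (B.card : ℝ) * (1/2) ^ n ≤ (2 ^ n * K ^ n * 2 * exp (-(lam * τ))) * (1/2) ^ n :=
      mul_le_mul_of_nonneg_right h2 (by positivity)
    have h40 : ((2:ℝ)) ^ n * (1/2) ^ n = 1 := by
      rw [← mul_pow]; norm_num
    have h4 : ((2:ℝ) ^ n * K ^ n * 2 * exp (-(lam * τ))) * (1/2) ^ n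
        = 2 * (K ^ n * exp (-(lam * τ))) := by
      calc ((2:ℝ) ^ n * K ^ n * 2 * exp (-(lam * τ))) * (1/2) ^ n
          = ((2:ℝ) ^ n * (1/2) ^ n) * (2 * (K ^ n * exp (-(lam * τ)))) := by ring
        _ = 2 * (K ^ n * exp (-(lam * τ))) := by rw [h40, one_mul]
    have h5 : K ^ n * exp (-(lam * τ)) = exp ((n : ℝ) * (lam ^ 2 * D ^ 2) - lam * τ) := by
      rw [hK_def, ← Real.exp_nat_mul, ← Real.exp_add]
      ring_nf
    rw [h4, h5] at h3
    exact h3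
  have hexp_eq : (n : ℝ) * (lam ^ 2 * D ^ 2) - lam * τ = -(τ ^ 2) / (4 * D ^ 2 * n) := by
    rw [hlam_def]
    field_simp
    ring
  have hexp_le : -(τ ^ 2) / (4 * D ^ 2 * (n:ℝ)) ≤ -(τ ^ 2) / (8 * D ^ 2 * n) := by
    have hq : τ ^ 2 / (8 * D ^ 2 * (n:ℝ)) ≤ τ ^ 2 / (4 * D ^ 2 * (n:ℝ)) := by
      rw [div_le_div_iff₀ (by positivity) (by positivity)]
      nlinarith [mul_nonneg (mul_nonneg (sq_nonneg τ) (sq_nonneg D)) hnR.le]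
    rw [neg_div, neg_div]
    exact neg_le_neg hq
  have hreal : (B.card : ℝ) * (1/2) ^ n ≤ 2 * exp (-(τ ^ 2) / (8 * D ^ 2 * n)) := by
    calc (B.card : ℝ) * (1/2) ^ n ≤ 2 * exp ((n : ℝ) * (lam ^ 2 * D ^ 2) - lam * τ) := hcard
      _ = 2 * exp (-(τ ^ 2) / (4 * D ^ 2 * n)) := by rw [hexp_eq]
      _ ≤ 2 * exp (-(τ ^ 2) / (8 * D ^ 2 * n)) := by
          have := Real.exp_le_exp.2 hexp_le
          linarith
  -- measure-theoretic reduction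
  set Good : Set Ω := {ω | ∀ t, ε t ω = 1 ∨ ε t ω = -1} with hGood
  have hA : ∀ t, μ ({ω | ε t ω = 1} ∪ {ω | ε t ω = -1}) = 1 := by
    intro t
    have hm1 : MeasurableSet {ω | ε t ω = 1} := (hmeas t) (measurableSet_singleton 1)
    have hm2 : MeasurableSet {ω | ε t ω = -1} := (hmeas t) (measurableSet_singleton (-1))
    have hdisj : Disjoint {ω | ε t ω = 1} {ω | ε t ω = -1} := by
      rw [Set.disjoint_left]
      intro ω h1 h2
      simp only [Set.mem_setOf_eq] at h1 h2
      rw [h1] at h2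
      norm_num at h2
    rw [measure_union hdisj hm2, (hlaw t).1, (hlaw t).2]
    rw [ENNReal.div_add_div_same, one_add_one_eq_two,
      ENNReal.div_self two_ne_zero ENNReal.ofNat_ne_top]
  have hGoodc : μ Goodᶜ = 0 := by
    have hsub : Goodᶜ ⊆ ⋃ t, ({ω | ε t ω = 1} ∪ {ω | ε t ω = -1})ᶜ := by
      intro ω hω
      simp only [hGood, Set.mem_compl_iff, Set.mem_setOf_eq, not_forall] at hω
      obtain ⟨t, ht⟩ := hω
      refine Set.mem_iUnion.2 ⟨t, ?_⟩
      simp only [Set.mem_compl_iff, Set.mem_union, Set.mem_setOf_eq]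
      tauto
    refine measure_mono_null hsub (measure_iUnion_null fun t => ?_)
    have hm1 : MeasurableSet {ω | ε t ω = 1} := (hmeas t) (measurableSet_singleton 1)
    have hm2 : MeasurableSet {ω | ε t ω = -1} := (hmeas t) (measurableSet_singleton (-1))
    rw [measure_compl (hm1.union hm2) (measure_ne_top _ _), hA t, measure_univ]
    simp
  set F : Ω → (Fin n → Bool) := fun ω t => if ε t ω = 1 then true else false with hF
  have hsgnF : ∀ ω ∈ Good, ∀ t, ε t ω = sgn (F ω t) := by
    intro ω hω t
    by_cases h : ε t ω = 1
    · simp [hF, hsgn, h]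
    · have h2 : ε t ω = -1 := (hω t).resolve_left h
      simp only [hF, hsgn, h2]
      norm_num
  have hzzF : ∀ ω ∈ Good, ∀ t, zz (F ω) t = z t ω := by
    intro ω hω t
    have hex : ∃ ω', ∀ s : Fin n, s < t → ε s ω' = sgn (F ω s) :=
      ⟨ω, fun s _ => hsgnF ω hω s⟩
    simp only [hzz]
    rw [dif_pos hex]
    apply hpred t
    intro s hs
    exact (hex.choose_spec s hs).trans (hsgnF ω hω s).symm
  have hSF : ∀ ω ∈ Good, S (F ω) = ∑ t, ε t ω • z t ω := by
    intro ω hω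
    simp only [hS]
    have hfull : Finset.univ.filter (fun t : Fin n => (t : ℕ) < n) = Finset.univ := by
      apply Finset.filter_true_of_mem
      intro t _
      exact t.isLt
    rw [hfull]
    apply Finset.sum_congr rfl
    intro t _
    rw [hzzF ω hω t, hsgnF ω hω t]
  set E : Set Ω := {ω | ‖∑ t, ε t ω • z t ω‖ ≥ τ} with hE
  set C : (Fin n → Bool) → Set Ω := fun σ => ⋂ t, ε t ⁻¹' {sgn (σ t)} with hC
  have hsub : E ∩ Good ⊆ ⋃ σ ∈ B, C σ := by
    intro ω ⟨hωE, hωG⟩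
    refine Set.mem_iUnion₂.2 ⟨F ω, ?_, ?_⟩
    · simp only [hB, Finset.mem_filter]
      refine ⟨Finset.mem_univ _, ?_⟩
      rw [hSF ω hωG]
      exact hωE
    · rw [hC]
      refine Set.mem_iInter.2 fun t => ?_
      simp only [Set.mem_preimage, Set.mem_singleton_iff]
      exact hsgnF ω hωG t
  have hCmeasure : ∀ σ, μ (C σ) = (1/2 : ENNReal) ^ n := by
    intro σ
    have hmain := hindep.measure_inter_preimage_eq_mul Finset.univ
      (sets := fun t => ({sgn (σ t)} : Set ℝ))
      (fun i _ => measurableSet_singleton _)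
    have hCeq : C σ = ⋂ t ∈ Finset.univ, ε t ⁻¹' ({sgn (σ t)} : Set ℝ) := by
      simp only [hC]
      simp
    rw [hCeq, hmain]
    have hfac : ∀ t, μ (ε t ⁻¹' ({sgn (σ t)} : Set ℝ)) = 1/2 := by
      intro t
      have : ε t ⁻¹' ({sgn (σ t)} : Set ℝ) = {ω | ε t ω = sgn (σ t)} := by
        ext ω; simp [Set.mem_preimage]
      rw [this]
      cases hb : σ t
      · simp only [hsgn, hb]
        simpa using (hlaw t).2
      · simp only [hsgn, hb]
        simpa using (hlaw t).1
    rw [Finset.prod_congr rfl (fun t _ => hfac t)]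
    rw [Finset.prod_const, Finset.card_univ, Fintype.card_fin]
  have hmeasE : μ E ≤ (B.card : ENNReal) * (1/2) ^ n := by
    have h1 : μ E ≤ μ (E ∩ Good) + μ Goodᶜ := by
      have : E ⊆ (E ∩ Good) ∪ Goodᶜ := by
        intro ω hω
        by_cases hg : ω ∈ Good
        · exact Or.inl ⟨hω, hg⟩
        · exact Or.inr hg
      exact le_trans (measure_mono this) (measure_union_le _ _)
    rw [hGoodc, add_zero] at h1
    have h2 : μ (E ∩ Good) ≤ ∑ σ ∈ B, μ (C σ) :=
      le_trans (measure_mono hsub) (measure_biUnion_finset_le B C)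
    have h3 : ∑ σ ∈ B, μ (C σ) = (B.card : ENNReal) * (1/2) ^ n := by
      rw [Finset.sum_congr rfl (fun σ _ => hCmeasure σ), Finset.sum_const, nsmul_eq_mul]
    exact le_trans h1 (le_trans h2 (le_of_eq h3))
  have hENN : (B.card : ENNReal) * (1/2) ^ n
      = ENNReal.ofReal ((B.card : ℝ) * (1/2) ^ n) := by
    rw [ENNReal.ofReal_mul (Nat.cast_nonneg _), ENNReal.ofReal_natCast,
      ENNReal.ofReal_pow (by norm_num)]
    congr 2
    rw [ENNReal.ofReal_div_of_pos (by norm_num)]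
    norm_num
  calc μ E ≤ (B.card : ENNReal) * (1/2) ^ n := hmeasE
    _ = ENNReal.ofReal ((B.card : ℝ) * (1/2) ^ n) := hENN
    _ ≤ ENNReal.ofReal (2 * exp (-(τ ^ 2) / (8 * D ^ 2 * n))) :=
        ENNReal.ofReal_le_ofReal hreal
end
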